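/- Let g be entire on ℂ^p with |g(z)| ≤ C e^{τ|z|}, and suppose sup_{x ∈ ℝ^p} |g(x)| ≤ M. Then for all z = x + iy ∈ ℂ^p, |g(z)| ≤ M e^{τ(|y₁| + ⋯ + |y_p|)}. -/

import Mathlib

open MeasureTheory Filter

noncomputable section

open Complex Set

def toC (p : ℕ) (x : EuclideanSpace ℝ (Fin p)) : EuclideanSpace ℂ (Fin p) :=
  WithLp.toLp 2 (fun i => (x i : ℂ))

open Complex in
lemma one_var_upper (h : ℂ → ℂ) (C τ M : ℝ) (hτ : 0 ≤ τ) (hC : 0 ≤ C)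
    (hd : Differentiable ℂ h)
    (hb : ∀ w, ‖h w‖ ≤ C * Real.exp (τ * ‖w‖))
    (hr : ∀ x : ℝ, ‖h x‖ ≤ M) :
    ∀ w : ℂ, 0 ≤ w.im → ‖h w‖ ≤ M * Real.exp (τ * w.im) := by
  intro w hw
  have key : ∀ ε : ℝ, 0 < ε → ‖h w‖ ≤ M * Real.exp ((τ + ε) * w.im) := by
    intro ε hε
    set f : ℂ → ℂ := fun ζ => h (I * ζ) * Complex.exp (-((τ + ε : ℝ) : ℂ) * ζ) with hf
    have hnf : ∀ ζ : ℂ, ‖f ζ‖ = ‖h (I * ζ)‖ * Real.exp (-(τ + ε) * ζ.re) := by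
      intro ζ
      rw [hf]
      simp only [norm_mul, Complex.norm_exp]
      congr 2
      simp
    have hfd : Differentiable ℂ f := by
      apply Differentiable.mul
      · exact hd.comp (differentiable_id.const_mul I)
      · exact Differentiable.cexp (differentiable_id.const_mul _)
    have hfb : ∀ ζ, ‖f ζ‖ ≤ C * Real.exp ((2 * τ + ε) * ‖ζ‖) := by
      intro ζ
      rw [hnf]
      have h2 : ‖h (I * ζ)‖ ≤ C * Real.exp (τ * ‖ζ‖) := by
        have := hb (I * ζ); simpa using this
      have h3 : Real.exp (-(τ + ε) * ζ.re) ≤ Real.exp ((τ + ε) * ‖ζ‖) := by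
        apply Real.exp_le_exp.2
        have h4 := Complex.abs_re_le_norm ζ
        have h5 := neg_abs_le ζ.re
        have h6 := le_abs_self ζ.re
        nlinarith
      calc ‖h (I * ζ)‖ * Real.exp (-(τ + ε) * ζ.re)
          ≤ (C * Real.exp (τ * ‖ζ‖)) * Real.exp ((τ + ε) * ‖ζ‖) := by
            apply mul_le_mul h2 h3 (Real.exp_pos _).le
            positivity
        _ = C * Real.exp ((2 * τ + ε) * ‖ζ‖) := by
            rw [mul_assoc, ← Real.exp_add]; ring_nf
    have hbdd : ∀ ζ : ℂ, 0 ≤ ζ.re → ‖f ζ‖ ≤ M := by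
      intro ζ hζ
      apply PhragmenLindelof.right_half_plane_of_tendsto_zero_on_real
        (hfd.diffContOnCl) ?_ ?_ ?_ hζ
      · refine ⟨1, by norm_num, 2 * τ + ε, ?_⟩
        apply Asymptotics.IsBigO.of_bound C
        filter_upwards with ζ
        simpa [Real.abs_exp] using hfb ζ
      · rw [tendsto_zero_iff_norm_tendsto_zero]
        have hcomp : ∀ x : ℝ, 0 ≤ x → ‖f x‖ ≤ C * Real.exp (-ε * x) := by
          intro x hx
          rw [hnf]
          have h2 : ‖h (I * x)‖ ≤ C * Real.exp (τ * x) := by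
            have := hb (I * x)
            simpa [_root_.abs_of_nonneg hx] using this
          calc ‖h (I * x)‖ * Real.exp (-(τ + ε) * (x:ℂ).re)
              ≤ (C * Real.exp (τ * x)) * Real.exp (-(τ + ε) * (x:ℂ).re) :=
                mul_le_mul_of_nonneg_right h2 (Real.exp_pos _).le
            _ = C * Real.exp (-ε * x) := by
                rw [mul_assoc, ← Real.exp_add, Complex.ofReal_re]
                congr 1; ring
        have hlim : Tendsto (fun x : ℝ => C * Real.exp (-ε * x)) atTop (nhds 0) := by
          rw [show (0:ℝ) = C * 0 by ring]
          exact (Real.tendsto_exp_atBot.comp (tendsto_id.const_mul_atTop_of_neg (by linarith))).const_mul C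
        refine squeeze_zero' ?_ ?_ hlim
        · filter_upwards with x using norm_nonneg _
        · filter_upwards [eventually_ge_atTop (0:ℝ)] with x hx using hcomp x hx
      · intro x
        rw [hnf]
        have h2 : (I : ℂ) * (x * I) = ((-x : ℝ) : ℂ) := by push_cast; ring_nf; simp [Complex.I_sq]
        have h3 : ((x:ℂ) * I).re = 0 := by simp
        rw [h2, h3]
        simpa using hr (-x)
    have hkey := hbdd (-I * w) (by simp [hw])
    rw [hnf] at hkey
    have hIw : I * (-I * w) = w := by ring_nf; simp [Complex.I_sq]
    have hre2 : (-I * w).re = w.im := by simp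
    rw [hIw, hre2] at hkey
    have e0 : ‖h w‖ = ‖h w‖ * Real.exp (-(τ + ε) * w.im) * Real.exp ((τ + ε) * w.im) := by
      rw [mul_assoc, ← Real.exp_add, show -(τ + ε) * w.im + (τ + ε) * w.im = 0 by ring,
        Real.exp_zero, mul_one]
    rw [e0]
    exact mul_le_mul_of_nonneg_right hkey (Real.exp_pos _).le
  have hcont : Tendsto (fun ε : ℝ => M * Real.exp ((τ + ε) * w.im)) (nhdsWithin 0 (Set.Ioi 0))
      (nhds (M * Real.exp (τ * w.im))) := by
    have : Continuous (fun ε : ℝ => M * Real.exp ((τ + ε) * w.im)) := by continuity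
    have h0 := this.tendsto 0
    simp only [add_zero] at h0
    exact h0.mono_left nhdsWithin_le_nhds
  exact ge_of_tendsto hcont (eventually_nhdsWithin_of_forall fun ε hε => key ε hε)

lemma one_var (h : ℂ → ℂ) (C τ M : ℝ) (hτ : 0 ≤ τ) (hC : 0 ≤ C)
    (hd : Differentiable ℂ h)
    (hb : ∀ w, ‖h w‖ ≤ C * Real.exp (τ * ‖w‖))
    (hr : ∀ x : ℝ, ‖h x‖ ≤ M) :
    ∀ w : ℂ, ‖h w‖ ≤ M * Real.exp (τ * |w.im|) := by
  intro w
  rcases le_total 0 w.im with hw | hw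
  · rw [_root_.abs_of_nonneg hw]
    exact one_var_upper h C τ M hτ hC hd hb hr w hw
  · rw [abs_of_nonpos hw]
    have := one_var_upper (fun z => h (-z)) C τ M hτ hC (hd.comp differentiable_neg)
      (fun z => by simpa using hb (-z))
      (fun x => by have := hr (-x); push_cast at this ⊢; simpa using this)
      (-w) (by simpa using hw)
    simpa using this

/-- an entire function of exponential type bounded on ℝ^p satisfies
the Phragmén–Lindelöf bound M·e^{τ(|y₁|+⋯+|y_p|)} on ℂ^p. -/
theorem multivariable_phragmen_lindelof (p : ℕ) (g : EuclideanSpace ℂ (Fin p) → ℂ)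
    (C τ M : ℝ)
    (hg : Differentiable ℂ g)
    (hbound : ∀ z, ‖g z‖ ≤ C * Real.exp (τ * ‖z‖))
    (hreal : ∀ x : EuclideanSpace ℝ (Fin p), ‖g (toC p x)‖ ≤ M) :
    ∀ z : EuclideanSpace ℂ (Fin p),
      ‖g z‖ ≤ M * Real.exp (τ * ∑ j, |(z j).im|) := by
  have hM : 0 ≤ M := le_trans (norm_nonneg _) (hreal 0)
  have hC : 0 ≤ C := le_trans (norm_nonneg (g 0)) (by simpa using hbound 0)
  rcases lt_or_ge τ 0 with hτ | hτ
  · -- τ < 0 : g is bounded, hence constant, hence zero (if p > 0)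
    rcases Nat.eq_zero_or_pos p with hp | hp
    · intro z
      subst hp
      have hz : z = toC 0 0 := PiLp.ext fun i => i.elim0
      rw [hz]
      have : (∑ j : Fin 0, |(z j).im|) = 0 := by simp
      calc ‖g (toC 0 0)‖ ≤ M := hreal 0
        _ ≤ M * Real.exp (τ * ∑ j : Fin 0, |((toC 0 0 : EuclideanSpace ℂ (Fin 0)) j).im|) := by
            simp
    · intro z
      have hbd : Bornology.IsBounded (Set.range g) := by
        rw [Metric.isBounded_iff_subset_closedBall 0]
        refine ⟨C, ?_⟩
        rintro y ⟨w, rfl⟩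
        have := hbound w
        have h1 : Real.exp (τ * ‖w‖) ≤ 1 := by
          rw [show (1:ℝ) = Real.exp 0 by simp]
          apply Real.exp_le_exp.2
          exact mul_nonpos_of_nonpos_of_nonneg hτ.le (norm_nonneg _)
        simp only [Metric.mem_closedBall, dist_zero_right]
        nlinarith
      have hconst : ∀ w, g w = g z := fun w => hg.apply_eq_apply_of_bounded hbd w z
      have hzero : ‖g z‖ = 0 := by
        by_contra hne
        have hpos : 0 < ‖g z‖ := lt_of_le_of_ne (norm_nonneg _) (Ne.symm hne)
        obtain ⟨t, ht⟩ : ∃ t : ℝ, C * Real.exp (τ * t) < ‖g z‖ ∧ 0 ≤ t := by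
          have hlim : Tendsto (fun t : ℝ => C * Real.exp (τ * t)) atTop (nhds 0) := by
            rw [show (0:ℝ) = C * 0 by ring]
            exact (Real.tendsto_exp_atBot.comp
              (tendsto_id.const_mul_atTop_of_neg hτ)).const_mul C
          have := hlim.eventually (eventually_lt_nhds hpos)
          obtain ⟨t, ht⟩ := ((this.and (eventually_ge_atTop (0:ℝ))).exists)
          exact ⟨t, ht.1, ht.2⟩
        set w : EuclideanSpace ℂ (Fin p) := EuclideanSpace.single ⟨0, hp⟩ (t : ℂ) with hw
        have hnw : ‖w‖ = t := by
          rw [hw, EuclideanSpace.norm_single]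
          simpa using ht.2
        have := hbound w
        rw [hconst w, hnw] at this
        exact absurd this (not_le.2 ht.1)
      rw [hzero]
      positivity
  · -- main case 0 ≤ τ
    suffices H : ∀ k : ℕ, k ≤ p → ∀ z : EuclideanSpace ℂ (Fin p),
        (∀ j : Fin p, k ≤ (j : ℕ) → (z j).im = 0) →
        ‖g z‖ ≤ M * Real.exp (τ * ∑ j, |(z j).im|) by
      intro z
      exact H p le_rfl z (fun j hj => absurd j.2 (not_lt.2 hj))
    intro k
    induction k with
    | zero =>
      intro _ z hz
      have hz' : z = toC p (WithLp.toLp 2 (fun j => (z j).re)) := by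
        refine PiLp.ext fun j => ?_
        apply Complex.ext <;> simp [toC, hz j (Nat.zero_le _)]
      have hsum : (∑ j, |(z j).im|) = 0 := by
        apply Finset.sum_eq_zero
        intro j _
        simp [hz j (Nat.zero_le _)]
      rw [hsum, hz']
      simpa using hreal (WithLp.toLp 2 (fun j => (z j).re))
    | succ k ih =>
      intro hk z hz
      have hkp : k < p := hk
      set k' : Fin p := ⟨k, hkp⟩ with hk'
      set u : ℂ → EuclideanSpace ℂ (Fin p) := fun w => WithLp.toLp 2 (Function.update z k' w) with hu
      have hupd : ∀ w : ℂ, u w = u 0 + w • EuclideanSpace.single k' (1 : ℂ) := by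
        intro w
        refine PiLp.ext fun j => ?_
        by_cases hj : j = k'
        · subst hj
          simp [hu, EuclideanSpace.single_apply]
        · simp [hu, Function.update_of_ne hj, EuclideanSpace.single_apply, hj]
      set h : ℂ → ℂ := fun w => g (u w) with hdef
      have hdiff : Differentiable ℂ h := by
        have he : h = fun w => g (u 0 + w • EuclideanSpace.single k' (1 : ℂ)) := by
          funext w; show g (u w) = _; rw [hupd w]
        rw [he]
        exact hg.comp ((differentiable_const _).add (differentiable_id.smul_const _))
      have hnorm : ∀ w : ℂ, ‖u w‖ ≤ ‖u 0‖ + ‖w‖ := by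
        intro w
        rw [hupd w]
        refine (norm_add_le _ _).trans ?_
        gcongr
        rw [norm_smul, EuclideanSpace.norm_single]
        simp
      set C' : ℝ := C * Real.exp (τ * ‖u 0‖) with hC'
      have hC'0 : 0 ≤ C' := by positivity
      have hb' : ∀ w : ℂ, ‖h w‖ ≤ C' * Real.exp (τ * ‖w‖) := by
        intro w
        calc ‖h w‖ ≤ C * Real.exp (τ * ‖u w‖) := hbound _
          _ ≤ C * Real.exp (τ * (‖u 0‖ + ‖w‖)) := by
              gcongr
              exact hnorm w
          _ = C' * Real.exp (τ * ‖w‖) := by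
              rw [hC', mul_assoc, ← Real.exp_add, mul_add]
      have hsum : ∀ w : ℂ, (∑ j, |(u w j).im|)
          = |w.im| + ∑ j ∈ Finset.univ \ {k'}, |(z j).im| := by
        intro w
        have he : (fun j => |(u w j).im|) = Function.update (fun j => |(z j).im|) k' |w.im| := by
          funext j
          by_cases hj : j = k'
          · subst hj; simp [hu]
          · simp [hu, Function.update_of_ne hj]
        rw [he]
        exact Finset.sum_update_of_mem (Finset.mem_univ k') (fun j => |(z j).im|) |w.im|
      set M' : ℝ := M * Real.exp (τ * ∑ j ∈ Finset.univ \ {k'}, |(z j).im|) with hM'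
      have hr' : ∀ x : ℝ, ‖h x‖ ≤ M' := by
        intro x
        have happ := ih hkp.le (u (x : ℂ)) ?_
        · refine happ.trans ?_
          rw [hM', hsum]
          simp
        · intro j hj
          by_cases hjk : j = k'
          · subst hjk; simp [hu]
          · rw [hu]
            simp only []
            rw [Function.update_of_ne hjk]
            apply hz
            have : (j : ℕ) ≠ k := fun hc => hjk (Fin.ext hc)
            omega
      have hfin := one_var h C' τ M' hτ hC'0 hdiff hb' hr' (z k')
      have huz : u (z k') = z := by simp [hu]
      rw [hdef] at hfin
      simp only [huz] at hfin
      refine hfin.trans ?_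
      rw [hM', mul_assoc, ← Real.exp_add, ← mul_add,
        Finset.sum_eq_sum_sdiff_singleton_add (Finset.mem_univ k') (fun j => |(z j).im|)]

end
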